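/- Let H be a shortest path graph and let K₁ and K₂ be two distinct maximal cliques in H. Then exactly one of the following holds: (i) there is no edge between a vertex of K₁ and a vertex of K₂ and K₁, K₂ are vertex-disjoint; (ii) K₁ and K₂ are vertex-disjoint and the set of edges joining vertices of K₁ to vertices of K₂ forms a nonempty matching (no two such edges share an endpoint); or (iii) K₁ and K₂ share exactly one vertex. -/

import Mathlib

open SimpleGraph

variable {V : Type*}

/-- An `(a,b)`-geodesic in `G`: a shortest path from `a` to `b`. -/
def Geodesic (G : SimpleGraph V) (a b : V) : Type _ :=
  {p : G.Walk a b // p.IsPath ∧ p.length = G.dist a b}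

/-- The set of index levels at which two geodesics differ
(position `i` in the support list is index level `i`; position `0` is `a`). -/
def diffIndices (G : SimpleGraph V) (a b : V) (U W : Geodesic G a b) : Set ℕ :=
  {i | U.1.support[i]? ≠ W.1.support[i]?}

/-- The shortest path graph `S(G,a,b)`: vertices are the `(a,b)`-geodesics,
two geodesics being adjacent iff they differ at exactly one index level. -/
def SPG (G : SimpleGraph V) (a b : V) : SimpleGraph (Geodesic G a b) where
  Adj U W := ∃! i, i ∈ diffIndices G a b U W
  symm := by
    constructor
    rintro U W ⟨i, hi, hu⟩
    exact ⟨i, Ne.symm hi, fun j hj => hu j (Ne.symm hj)⟩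
  loopless := by
    constructor
    rintro U ⟨i, hi, -⟩
    exact hi rfl

/-- A walk is determined by its support. -/
private lemma walk_support_inj {G : SimpleGraph V} :
    ∀ {a b : V} (p q : G.Walk a b), p.support = q.support → p = q := by
  intro a b p
  induction p with
  | nil =>
    intro q h
    cases q with
    | nil => rfl
    | cons h' q' =>
      exfalso
      simp only [Walk.support_nil, Walk.support_cons, List.cons.injEq, true_and] at h
      exact q'.support_ne_nil h.symm
  | cons hadj p' ih =>
    intro q h
    cases q with
    | nil =>
      exfalso
      simp only [Walk.support_nil, Walk.support_cons, List.cons.injEq, true_and] at h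
      exact p'.support_ne_nil h
    | cons h' q' =>
      simp only [Walk.support_cons, List.cons.injEq, true_and] at h
      have hhead : p'.support.head (p'.support_ne_nil) = q'.support.head (q'.support_ne_nil) := by
        congr 1
      rw [Walk.head_support, Walk.head_support] at hhead
      subst hhead
      rw [ih q' h]

private lemma geo_ext {G : SimpleGraph V} {a b : V} {U W : Geodesic G a b}
    (h : ∀ k : ℕ, U.1.support[k]? = W.1.support[k]?) : U = W :=
  Subtype.ext (walk_support_inj _ _ (List.ext_getElem? h))

private lemma adj_of_agree {G : SimpleGraph V} {a b : V} {U W : Geodesic G a b} {i : ℕ}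
    (hne : U ≠ W) (hag : ∀ k, k ≠ i → U.1.support[k]? = W.1.support[k]?) :
    (SPG G a b).Adj U W := by
  have hdi : U.1.support[i]? ≠ W.1.support[i]? := by
    intro h
    apply hne
    apply geo_ext
    intro k
    by_cases hk : k = i
    · subst hk; exact h
    · exact hag k hk
  exact ⟨i, hdi, fun j hj => by_contra fun hji => hj (hag j hji)⟩

private lemma agree_of_adj_adj {G : SimpleGraph V} {a b : V} {x y u : Geodesic G a b} {i : ℕ}
    (hi : x.1.support[i]? ≠ y.1.support[i]?)
    (hiu : ∀ j, x.1.support[j]? ≠ y.1.support[j]? → j = i)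
    (hux : (SPG G a b).Adj u x) (huy : (SPG G a b).Adj u y) :
    ∀ k, k ≠ i → u.1.support[k]? = x.1.support[k]? := by
  obtain ⟨p, hp, hpu⟩ := hux
  obtain ⟨q, hq, hqu⟩ := huy
  have hpi : p = i := by
    by_contra hpi
    have hxy : x.1.support[p]? = y.1.support[p]? := by
      by_contra h; exact hpi (hiu p h)
    have hpq : p = q := hqu p (fun h => hp (h.trans hxy.symm))
    have hux_i : u.1.support[i]? = x.1.support[i]? := by
      by_contra h; exact hpi ((hpu i h).symm)
    have huy_i : u.1.support[i]? = y.1.support[i]? := by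
      by_contra h; exact hpi (((hqu i h).trans hpq.symm).symm)
    exact hi (hux_i.symm.trans huy_i)
  intro k hk
  by_contra h
  exact hk ((hpu k h).trans hpi)

private lemma clique_agree {G : SimpleGraph V} {a b : V} {K : Set (Geodesic G a b)}
    (hK : (SPG G a b).IsClique K) {x y : Geodesic G a b} (hx : x ∈ K) (hy : y ∈ K)
    (hxy : x ≠ y) {i : ℕ}
    (hi : x.1.support[i]? ≠ y.1.support[i]?)
    (hiu : ∀ j, x.1.support[j]? ≠ y.1.support[j]? → j = i)
    {u : Geodesic G a b} (hu : u ∈ K) :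
    ∀ k, k ≠ i → u.1.support[k]? = x.1.support[k]? := by
  rcases eq_or_ne u x with rfl | hux
  · intro k _; rfl
  rcases eq_or_ne u y with rfl | huy
  · intro k hk
    by_contra h
    exact hk (hiu k (Ne.symm h))
  exact agree_of_adj_adj hi hiu (hK hu hx hux) (hK hu hy huy)

private lemma eq_of_two_common {G : SimpleGraph V} {a b : V}
    {K₁ K₂ : Set (Geodesic G a b)}
    (hK₁ : (SPG G a b).IsClique K₁)
    (hmax₁ : ∀ K', (SPG G a b).IsClique K' → K₁ ⊆ K' → K' = K₁)
    (hK₂ : (SPG G a b).IsClique K₂)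
    (hmax₂ : ∀ K', (SPG G a b).IsClique K' → K₂ ⊆ K' → K' = K₂)
    {x y : Geodesic G a b}
    (hx1 : x ∈ K₁) (hx2 : x ∈ K₂) (hy1 : y ∈ K₁) (hy2 : y ∈ K₂) (hxy : x ≠ y) :
    K₁ = K₂ := by
  obtain ⟨i, hi, hiu⟩ := hK₁ hx1 hy1 hxy
  have hag : ∀ u ∈ K₁ ∪ K₂, ∀ k, k ≠ i → u.1.support[k]? = x.1.support[k]? := by
    rintro u (hu | hu)
    · exact clique_agree hK₁ hx1 hy1 hxy hi hiu hu
    · exact clique_agree hK₂ hx2 hy2 hxy hi hiu hu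
  have hcl : (SPG G a b).IsClique (K₁ ∪ K₂) := by
    intro u hu w hw huw
    apply adj_of_agree huw
    intro k hk
    rw [hag u hu k hk, hag w hw k hk]
  have h1 := hmax₁ _ hcl Set.subset_union_left
  have h2 := hmax₂ _ hcl Set.subset_union_right
  exact h1.symm.trans h2

private lemma matching_lemma {G : SimpleGraph V} {a b : V}
    {K₁ K₂ : Set (Geodesic G a b)}
    (hK₂ : (SPG G a b).IsClique K₂)
    (hmax₂ : ∀ K', (SPG G a b).IsClique K' → K₂ ⊆ K' → K' = K₂)
    (hdisj : Disjoint K₁ K₂)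
    {u w w' : Geodesic G a b} (hu : u ∈ K₁) (hw : w ∈ K₂) (hw' : w' ∈ K₂)
    (h1 : (SPG G a b).Adj u w) (h2 : (SPG G a b).Adj u w') : w = w' := by
  by_contra hww
  obtain ⟨i, hi, hiu⟩ := hK₂ hw hw' hww
  have hagu := agree_of_adj_adj hi hiu h1 h2
  have hcl : (SPG G a b).IsClique (insert u K₂) := by
    rintro p (rfl | hp) q hq hpq
    · rcases hq with rfl | hq
      · exact absurd rfl hpq
      · apply adj_of_agree hpq
        intro k hk
        rw [hagu k hk, (clique_agree hK₂ hw hw' hww hi hiu hq k hk).symm]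
    · rcases hq with rfl | hq
      · refine ((SPG G a b).adj_symm ?_)
        apply adj_of_agree (Ne.symm hpq)
        intro k hk
        rw [hagu k hk, (clique_agree hK₂ hw hw' hww hi hiu hp k hk).symm]
      · exact hK₂ hp hq hpq
  have := hmax₂ _ hcl (Set.subset_insert _ _)
  have huK₂ : u ∈ K₂ := this ▸ Set.mem_insert u K₂
  exact Set.disjoint_left.mp hdisj hu huK₂

/-- trichotomy for a pair of distinct maximal cliques. -/
theorem stmt_3 {V : Type*} (G : SimpleGraph V) (a b : V) (hab : a ≠ b)
    (K₁ K₂ : Set (Geodesic G a b))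
    (hK₁ : (SPG G a b).IsClique K₁)
    (hmax₁ : ∀ K', (SPG G a b).IsClique K' → K₁ ⊆ K' → K' = K₁)
    (hK₂ : (SPG G a b).IsClique K₂)
    (hmax₂ : ∀ K', (SPG G a b).IsClique K' → K₂ ⊆ K' → K' = K₂)
    (hne : K₁ ≠ K₂) :
    let P₁ : Prop := Disjoint K₁ K₂ ∧ ∀ u ∈ K₁, ∀ w ∈ K₂, ¬ (SPG G a b).Adj u w
    let P₂ : Prop := Disjoint K₁ K₂ ∧ (∃ u ∈ K₁, ∃ w ∈ K₂, (SPG G a b).Adj u w) ∧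
      (∀ u ∈ K₁, ∀ w ∈ K₂, ∀ w' ∈ K₂, (SPG G a b).Adj u w → (SPG G a b).Adj u w' → w = w') ∧
      (∀ w ∈ K₂, ∀ u ∈ K₁, ∀ u' ∈ K₁, (SPG G a b).Adj w u → (SPG G a b).Adj w u' → u = u')
    let P₃ : Prop := ∃ x, K₁ ∩ K₂ = {x}
    (P₁ ∧ ¬P₂ ∧ ¬P₃) ∨ (¬P₁ ∧ P₂ ∧ ¬P₃) ∨ (¬P₁ ∧ ¬P₂ ∧ P₃) := by
  intro P₁ P₂ P₃
  by_cases hdisj : Disjoint K₁ K₂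
  · have hnP₃ : ¬P₃ := by
      rintro ⟨x, hx⟩
      have hx1 : x ∈ K₁ ∩ K₂ := by rw [hx]; rfl
      exact Set.disjoint_left.mp hdisj hx1.1 hx1.2
    by_cases hedge : ∃ u ∈ K₁, ∃ w ∈ K₂, (SPG G a b).Adj u w
    · refine Or.inr (Or.inl ⟨?_, ⟨hdisj, hedge, ?_, ?_⟩, hnP₃⟩)
      · rintro ⟨-, hno⟩
        obtain ⟨u, hu, w, hw, hadj⟩ := hedge
        exact hno u hu w hw hadj
      · intro u hu w hw w' hw' h1 h2
        exact matching_lemma hK₂ hmax₂ hdisj hu hw hw' h1 h2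
      · intro w hw u hu u' hu' h1 h2
        exact matching_lemma hK₁ hmax₁ hdisj.symm hw hu hu' h1 h2
    · exact Or.inl ⟨⟨hdisj, fun u hu w hw hadj => hedge ⟨u, hu, w, hw, hadj⟩⟩,
        fun hP₂ => hedge hP₂.2.1, hnP₃⟩
  · obtain ⟨x, hx1, hx2⟩ := Set.not_disjoint_iff.mp hdisj
    refine Or.inr (Or.inr ⟨fun hP₁ => hdisj hP₁.1, fun hP₂ => hdisj hP₂.1, ⟨x, ?_⟩⟩)
    ext y
    constructor
    · rintro ⟨hy1, hy2⟩
      by_contra hyx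
      exact hne (eq_of_two_common hK₁ hmax₁ hK₂ hmax₂ hx1 hx2 hy1 hy2 (Ne.symm hyx))
    · rintro rfl
      exact ⟨hx1, hx2⟩
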